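/- Let X be a pre-Riesz space with dim X = n < ∞. Then the set of all band projections on X is finite and its cardinality equals 2^m for some natural number m with 0 ≤ m ≤ n. -/

import Mathlib

set_option linter.unusedSectionVars false
set_option linter.unusedVariables false
set_option maxHeartbeats 1000000


open Pointwise

variable {X : Type*} [AddCommGroup X] [PartialOrder X] [IsOrderedAddMonoid X] [Module ℝ X] [PosSMulStrictMono ℝ X]

/-- Two elements of an ordered vector space are disjoint if the sets `{x+y, -x-y}` and
`{x-y, y-x}` have the same set of upper bounds. -/
def UDisjoint (x y : X) : Prop :=
  upperBounds ({x + y, -x - y} : Set X) = upperBounds ({x - y, y - x} : Set X)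

/-- The disjoint complement `S^⊥` of a set `S`. -/
def dComp (S : Set X) : Set X := {x : X | ∀ s ∈ S, UDisjoint x s}

/-- A band: a set equal to its double disjoint complement. -/
def IsBand (B : Set X) : Prop := B = dComp (dComp B)

/-- A projection band: a band `B` with `B ∩ B^⊥ = {0}` and `B + B^⊥ = X`. -/
def IsProjBand (B : Set X) : Prop :=
  IsBand B ∧ B ∩ dComp B = {0} ∧ ∀ x : X, ∃ b ∈ B, ∃ c ∈ dComp B, x = b + c

/-- A positive linear operator. -/
def IsPosMap (T : X →ₗ[ℝ] X) : Prop := ∀ x : X, 0 ≤ x → 0 ≤ T x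

/-- A band projection: a linear projection whose range is a projection band and whose
kernel is the disjoint complement of the range. -/
def IsBandProj (P : X →ₗ[ℝ] X) : Prop :=
  P ∘ₗ P = P ∧ IsProjBand (Set.range ⇑P) ∧ (LinearMap.ker P : Set X) = dComp (Set.range ⇑P)

/-- A pre-Riesz space: for every nonempty finite `A ⊆ X` and every `x`, if the upper bounds
of `x + A` are contained in the upper bounds of `A`, then `x ≥ 0`. -/
def IsPreRiesz (X : Type*) [AddCommGroup X] [PartialOrder X] [IsOrderedAddMonoid X] [Module ℝ X] [PosSMulStrictMono ℝ X] : Prop :=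
  ∀ (A : Set X) (x : X), A.Finite → A.Nonempty →
    upperBounds ((x + ·) '' A) ⊆ upperBounds A → 0 ≤ x

/-- `{x, -x}`, whose supremum is `|x|`. -/
def pmSet (x : X) : Set X := {x, -x}

theorem pmSet_finite (x : X) : (pmSet x).Finite := (Set.finite_singleton _).insert _
theorem pmSet_nonempty (x : X) : (pmSet x).Nonempty := ⟨x, Set.mem_insert _ _⟩
theorem mem_pmSet_left (x : X) : x ∈ pmSet x := Set.mem_insert _ _
theorem mem_pmSet_right (x : X) : -x ∈ pmSet x := Set.mem_insert_of_mem _ rfl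

theorem mem_ub_pm {v x : X} : v ∈ upperBounds (pmSet x) ↔ x ≤ v ∧ -x ≤ v := by
  constructor
  · exact fun h => ⟨h (mem_pmSet_left x), h (mem_pmSet_right x)⟩
  · rintro ⟨h1, h2⟩ a ha
    rcases ha with rfl | ha
    · exact h1
    · rcases ha with rfl; exact h2

theorem mem_ub_add {v : X} {S T : Set X} :
    v ∈ upperBounds (S + T) ↔ ∀ s ∈ S, ∀ t ∈ T, s + t ≤ v := by
  constructor
  · exact fun h s hs t ht => h (Set.add_mem_add hs ht)
  · rintro h w ⟨s, hs, t, ht, rfl⟩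
    exact h s hs t ht

theorem mem_ub_union {v : X} {S T : Set X} :
    v ∈ upperBounds (S ∪ T) ↔ v ∈ upperBounds S ∧ v ∈ upperBounds T := by
  rw [upperBounds_union]; rfl

theorem pmSet_neg (x : X) : pmSet (-x) = pmSet x := by
  unfold pmSet; rw [neg_neg]; exact Set.pair_comm _ _

/-- `UDisjoint` in normalized form `|x+y| = |x-y|`. -/
theorem udis_iff_ub {x y : X} :
    UDisjoint x y ↔ upperBounds (pmSet (x + y)) = upperBounds (pmSet (x - y)) := by
  unfold UDisjoint pmSet
  rw [show -x - y = -(x + y) from by abel, show y - x = -(x - y) from by abel]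

theorem lemE (hX : IsPreRiesz X) {v t : X} (h1 : t ≤ v) (h2 : -t ≤ v) : 0 ≤ v := by
  set s : X := (2:ℝ)⁻¹ • t with hs
  have halft : s + s = t := by
    rw [hs, ← two_smul ℝ ((2:ℝ)⁻¹ • t), smul_smul]; norm_num
  apply hX ({s, -s} : Set X) v
  · exact (Set.finite_singleton _).insert _
  · exact ⟨_, Set.mem_insert _ _⟩
  · intro w hw
    have hw1 : v + s ≤ w := hw ⟨_, Set.mem_insert _ _, rfl⟩
    have hw2 : v + -s ≤ w := hw ⟨_, Set.mem_insert_of_mem _ rfl, rfl⟩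
    intro a ha
    rcases ha with rfl | ha
    · calc s = t + -s := by rw [← halft]; abel
        _ ≤ v + -s := add_le_add_left h1 _
        _ ≤ w := hw2
    · rcases ha with rfl
      calc -s = -t + s := by rw [← halft]; abel
        _ ≤ v + s := add_le_add_left h2 _
        _ ≤ w := hw1

theorem lemC (hX : IsPreRiesz X) {v p q : X} (h1 : p + q ≤ v) (h2 : p - q ≤ v) : p ≤ v := by
  have h0 : 0 ≤ v - p := by
    refine lemE hX (t := q) (le_sub_iff_add_le'.mpr ?_) (le_sub_iff_add_le'.mpr ?_)
    · exact h1
    · rwa [← sub_eq_add_neg]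
  exact sub_nonneg.mp h0

theorem lemC' (hX : IsPreRiesz X) {v p q : X} (h1 : p + q ≤ v) (h2 : p + -q ≤ v) : p ≤ v :=
  lemC hX h1 (by rwa [sub_eq_add_neg])

theorem ub_add_right {S T U : Set X} (h : upperBounds T ⊆ upperBounds S) :
    upperBounds (T + U) ⊆ upperBounds (S + U) := by
  intro v hv
  rintro w ⟨a, ha, u, hu, rfl⟩
  have hvu : v - u ∈ upperBounds T := by
    intro t ht
    rw [le_sub_iff_add_le]
    exact hv (Set.add_mem_add ht hu)
  have : a ≤ v - u := h hvu ha
  rwa [le_sub_iff_add_le] at this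

theorem ub_congr_add {S T U : Set X} (h : upperBounds T = upperBounds S) :
    upperBounds (T + U) = upperBounds (S + U) :=
  Set.Subset.antisymm (ub_add_right h.subset) (ub_add_right h.superset)

theorem ub_cancel (hX : IsPreRiesz X) {S E T : Set X} (hSf : S.Finite) (hEf : E.Finite)
    (hSn : S.Nonempty) (hEn : E.Nonempty)
    (h : upperBounds (T + E) ⊆ upperBounds (S + E)) : upperBounds T ⊆ upperBounds S := by
  intro u hu s hs
  have h0 : 0 ≤ u - s := by
    apply hX (S + E) (u - s) (hSf.add hEf) (hSn.add hEn)
    intro v hv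
    apply h
    rintro w ⟨t, ht, e, he, rfl⟩
    have hone : (u - s) + (s + e) ≤ v := hv ⟨s + e, Set.add_mem_add hs he, rfl⟩
    calc t + e ≤ u + e := add_le_add_left (hu ht) e
      _ = (u - s) + (s + e) := by abel
      _ ≤ v := hone
  exact sub_nonneg.mp h0

theorem half_bound {v a : X} (h : a + a ≤ v) : a ≤ (2:ℝ)⁻¹ • v := by
  have : (2:ℝ)⁻¹ • (a + a) = a := by
    rw [← two_smul ℝ a, smul_smul]; norm_num
  calc a = (2:ℝ)⁻¹ • (a + a) := this.symm
    _ ≤ (2:ℝ)⁻¹ • v := smul_le_smul_of_nonneg_left h (by norm_num)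

theorem half_add_half (v : X) : (2:ℝ)⁻¹ • v + (2:ℝ)⁻¹ • v = v := by
  rw [← two_smul ℝ ((2:ℝ)⁻¹ • v), smul_smul]; norm_num

theorem udis_core (hX : IsPreRiesz X) {x w : X}
    (h : upperBounds (pmSet x ∪ pmSet w) = upperBounds (pmSet x + pmSet w)) :
    upperBounds (pmSet (x + w)) = upperBounds (pmSet x + pmSet w) := by
  apply Set.Subset.antisymm
  · -- `sup (pm x + pm w) ≤ sup (pm (x+w))` via cancellation
    apply ub_cancel hX (E := pmSet x + pmSet w)
      ((pmSet_finite x).add (pmSet_finite w)) ((pmSet_finite x).add (pmSet_finite w))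
      ((pmSet_nonempty x).add (pmSet_nonempty w)) ((pmSet_nonempty x).add (pmSet_nonempty w))
    intro v hv
    have hb := mem_ub_add.mp hv
    have h2x : x + x ≤ v := by
      have := hb _ (mem_pmSet_left (x+w)) _ (Set.add_mem_add (mem_pmSet_left x) (mem_pmSet_right w))
      calc x + x = (x + w) + (x + -w) := by abel
        _ ≤ v := this
    have h2w : w + w ≤ v := by
      have := hb _ (mem_pmSet_left (x+w)) _ (Set.add_mem_add (mem_pmSet_right x) (mem_pmSet_left w))
      calc w + w = (x + w) + (-x + w) := by abel
        _ ≤ v := this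
    have h2nx : -x + -x ≤ v := by
      have := hb _ (mem_pmSet_right (x+w)) _ (Set.add_mem_add (mem_pmSet_right x) (mem_pmSet_left w))
      calc -x + -x = -(x + w) + (-x + w) := by abel
        _ ≤ v := this
    have h2nw : -w + -w ≤ v := by
      have := hb _ (mem_pmSet_right (x+w)) _ (Set.add_mem_add (mem_pmSet_left x) (mem_pmSet_right w))
      calc -w + -w = -(x + w) + (x + -w) := by abel
        _ ≤ v := this
    have hvh : (2:ℝ)⁻¹ • v ∈ upperBounds (pmSet x + pmSet w) := by
      rw [← h, mem_ub_union]
      exact ⟨mem_ub_pm.mpr ⟨half_bound h2x, half_bound h2nx⟩,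
        mem_ub_pm.mpr ⟨half_bound h2w, half_bound h2nw⟩⟩
    rw [mem_ub_add]
    intro s hs t ht
    calc s + t ≤ (2:ℝ)⁻¹ • v + (2:ℝ)⁻¹ • v := add_le_add (hvh hs) (hvh ht)
      _ = v := half_add_half v
  · -- easy pointwise direction
    intro v hv
    rw [mem_ub_pm]
    refine ⟨hv (Set.add_mem_add (mem_pmSet_left x) (mem_pmSet_left w)), ?_⟩
    have := hv (Set.add_mem_add (mem_pmSet_right x) (mem_pmSet_right w))
    calc -(x + w) = -x + -w := by abel
      _ ≤ v := this

theorem udis_of_ub_union_eq (hX : IsPreRiesz X) {x w : X}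
    (h : upperBounds (pmSet x ∪ pmSet w) = upperBounds (pmSet x + pmSet w)) :
    UDisjoint x w := by
  rw [udis_iff_ub]
  have c1 := udis_core hX h
  have h' : upperBounds (pmSet x ∪ pmSet (-w)) = upperBounds (pmSet x + pmSet (-w)) := by
    rw [pmSet_neg]; exact h
  have c2 := udis_core hX h'
  rw [pmSet_neg] at c2
  rw [show x - w = x + -w from sub_eq_add_neg x w]
  exact c1.trans c2.symm

/-- general: `sup (pm x + pm w) ≤ sup (pm x ∪ pm w)` (i.e. `|x| ∨ |w| ≤ |x| + |w|` reversed...). -/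
theorem ub_pm_add_subset_union (hX : IsPreRiesz X) (x w : X) :
    upperBounds (pmSet x + pmSet w) ⊆ upperBounds (pmSet x ∪ pmSet w) := by
  intro v hv
  have hb := mem_ub_add.mp hv
  have h1 : x + w ≤ v := hb _ (mem_pmSet_left x) _ (mem_pmSet_left w)
  have h2 : x + -w ≤ v := hb _ (mem_pmSet_left x) _ (mem_pmSet_right w)
  have h3 : -x + w ≤ v := hb _ (mem_pmSet_right x) _ (mem_pmSet_left w)
  have h4 : -x + -w ≤ v := hb _ (mem_pmSet_right x) _ (mem_pmSet_right w)
  rw [mem_ub_union, mem_ub_pm, mem_ub_pm]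
  exact ⟨⟨lemC' hX h1 h2, lemC' hX h3 h4⟩,
    ⟨lemC' hX (by rwa [add_comm w x]) (by rwa [show w + -x = -x + w from by abel]),
     lemC' hX (by rwa [show -w + x = x + -w from by abel]) (by rwa [show -w + -x = -x + -w from by abel])⟩⟩

theorem ub_union_eq_of_udis (hX : IsPreRiesz X) {x w : X} (h : UDisjoint x w) :
    upperBounds (pmSet x ∪ pmSet w) = upperBounds (pmSet x + pmSet w) := by
  have hub := udis_iff_ub.mp h
  -- `sup (pm x ∪ pm w) ≤ sup (pm (x+w))`
  have step_a : upperBounds (pmSet (x + w)) ⊆ upperBounds (pmSet x ∪ pmSet w) := by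
    intro v hv
    have hv' : v ∈ upperBounds (pmSet (x - w)) := hub ▸ hv
    rcases mem_ub_pm.mp hv with ⟨ha1, ha2⟩
    rcases mem_ub_pm.mp hv' with ⟨hb1, hb2⟩
    rw [mem_ub_union, mem_ub_pm, mem_ub_pm]
    refine ⟨⟨lemC' hX ha1 (by rwa [← sub_eq_add_neg]), ?_⟩, ?_, ?_⟩
    · exact lemC' hX (by rwa [show -x + w = -(x - w) from by abel])
        (by rwa [show -x + -w = -(x + w) from by abel])
    · exact lemC' hX (by rwa [show w + x = x + w from by abel])
        (by rwa [show w + -x = -(x - w) from by abel])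
    · exact lemC' hX (by rwa [show -w + x = x - w from by abel])
        (by rwa [show -w + -x = -(x + w) from by abel])
  -- `sup (pm x + pm w) ≤ sup (pm (x+w))`
  have step_e : upperBounds (pmSet (x + w)) ⊆ upperBounds (pmSet x + pmSet w) := by
    intro v hv
    have hv' : v ∈ upperBounds (pmSet (x - w)) := hub ▸ hv
    rcases mem_ub_pm.mp hv with ⟨ha1, ha2⟩
    rcases mem_ub_pm.mp hv' with ⟨hb1, hb2⟩
    rw [mem_ub_add]
    rintro s (rfl | hs) t (rfl | ht)
    · exact ha1
    · rcases ht with rfl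
      rwa [← sub_eq_add_neg]
    · rcases hs with rfl
      calc -x + t = -(x - t) := by abel
        _ ≤ v := hb2
    · rcases hs with rfl; rcases ht with rfl
      calc -x + -w = -(x + w) := by abel
        _ ≤ v := ha2
  -- cancellation: `sup (pm (x+w)) ≤ sup (pm x ∪ pm w)`
  have r1 : upperBounds (pmSet x ∪ pmSet w) ⊆ upperBounds (pmSet (x + w)) := by
    apply ub_cancel hX (E := pmSet x ∪ pmSet w) (pmSet_finite (x + w))
      ((pmSet_finite x).union (pmSet_finite w)) (pmSet_nonempty (x + w))
      ((pmSet_nonempty x).mono Set.subset_union_left)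
    -- ub ((pm x ∪ pm w) + (pm x ∪ pm w)) ⊆ ub (pm (x+w) + (pm x ∪ pm w))
    have s1 : upperBounds ((pmSet x ∪ pmSet w) + (pmSet x ∪ pmSet w)) ⊆
        upperBounds (pmSet (x + w) + pmSet (x - w)) := by
      intro v hv
      have hb := mem_ub_add.mp hv
      rw [mem_ub_add]
      have hxx : x + x ≤ v := hb _ (Set.mem_union_left _ (mem_pmSet_left x)) _
        (Set.mem_union_left _ (mem_pmSet_left x))
      have hww : w + w ≤ v := hb _ (Set.mem_union_right _ (mem_pmSet_left w)) _
        (Set.mem_union_right _ (mem_pmSet_left w))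
      have hnxx : -x + -x ≤ v := hb _ (Set.mem_union_left _ (mem_pmSet_right x)) _
        (Set.mem_union_left _ (mem_pmSet_right x))
      have hnww : -w + -w ≤ v := hb _ (Set.mem_union_right _ (mem_pmSet_right w)) _
        (Set.mem_union_right _ (mem_pmSet_right w))
      rintro s (rfl | hs) t (rfl | ht)
      · calc (x + w) + (x - w) = x + x := by abel
          _ ≤ v := hxx
      · rcases ht with rfl
        calc (x + w) + -(x - w) = w + w := by abel
          _ ≤ v := hww
      · rcases hs with rfl
        calc -(x + w) + (x - w) = -w + -w := by abel
          _ ≤ v := hnww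
      · rcases hs with rfl; rcases ht with rfl
        calc -(x + w) + -(x - w) = -x + -x := by abel
          _ ≤ v := hnxx
    have s2 : upperBounds (pmSet (x + w) + pmSet (x - w)) =
        upperBounds (pmSet (x + w) + pmSet (x + w)) := by
      have := ub_congr_add (U := pmSet (x + w)) hub.symm
      rwa [add_comm (pmSet (x - w)) (pmSet (x + w)),
        add_comm (pmSet (x + w)) (pmSet (x + w))] at this
    have s3 : upperBounds (pmSet (x + w) + pmSet (x + w)) ⊆
        upperBounds ((pmSet x ∪ pmSet w) + pmSet (x + w)) := ub_add_right step_a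
    intro v hv
    have := s3 (s2 ▸ s1 hv)
    rwa [add_comm (pmSet x ∪ pmSet w) (pmSet (x + w))] at this
  exact Set.Subset.antisymm (fun v hv => step_e (r1 hv)) (ub_pm_add_subset_union hX x w)

/-- `|p| ≤ |p + q|` when `p ⊥ q`. -/
theorem ub_pm_sum_subset (hX : IsPreRiesz X) {p q : X} (hpq : UDisjoint p q) :
    upperBounds (pmSet (p + q)) ⊆ upperBounds (pmSet p) := by
  intro v hv
  have hv' : v ∈ upperBounds (pmSet (p - q)) := (udis_iff_ub.mp hpq) ▸ hv
  rcases mem_ub_pm.mp hv with ⟨ha1, ha2⟩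
  rcases mem_ub_pm.mp hv' with ⟨hb1, hb2⟩
  rw [mem_ub_pm]
  refine ⟨lemC hX ha1 hb1, lemC' hX (q := q) ?_ ?_⟩
  · calc -p + q = -(p - q) := by abel
      _ ≤ v := hb2
  · calc -p + -q = -(p + q) := by abel
      _ ≤ v := ha2

/-- Lemma B : `p ⊥ q` and `(p+q) ⊥ z` imply `p ⊥ z`. -/
theorem udis_of_udis_add (hX : IsPreRiesz X) {p q z : X} (hpq : UDisjoint p q)
    (hz : UDisjoint (p + q) z) : UDisjoint p z := by
  apply udis_of_ub_union_eq hX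
  refine Set.Subset.antisymm ?_ (ub_pm_add_subset_union hX p z)
  -- hard direction via cancellation with E = pm (p+q) ∪ pm z
  have H2 := ub_union_eq_of_udis hX hz
  set A := pmSet p with hA
  set Z := pmSet z with hZ
  set S' := pmSet (p + q) with hS'
  apply ub_cancel hX (E := S' ∪ Z)
    (((pmSet_finite p).add (pmSet_finite z))) ((pmSet_finite _).union (pmSet_finite _))
    ((pmSet_nonempty p).add (pmSet_nonempty z))
    ((pmSet_nonempty _).mono Set.subset_union_left)
  -- goal : ub ((A ∪ Z) + (S' ∪ Z)) ⊆ ub ((A + Z) + (S' ∪ Z))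
  intro v hv
  -- move to ub ((S' + Z) + (A ∪ Z)) via H2
  have hv1 : v ∈ upperBounds ((S' ∪ Z) + (A ∪ Z)) := by
    rwa [add_comm (S' ∪ Z) (A ∪ Z)]
  have hv2 : v ∈ upperBounds ((S' + Z) + (A ∪ Z)) := by
    rwa [← ub_congr_add (U := A ∪ Z) H2]
  -- now the pointwise/shift step (i)
  have hv3 : v ∈ upperBounds ((S' + Z) + A) ∧ v ∈ upperBounds ((S' + Z) + Z) := by
    rw [← mem_ub_union, ← Set.add_union]
    exact hv2
  rw [show (A + Z) + (S' ∪ Z) = ((A + Z) + S') ∪ ((A + Z) + Z) from Set.add_union ..,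
    mem_ub_union]
  constructor
  · rw [show (A + Z) + S' = (S' + Z) + A from by abel]
    exact hv3.1
  · rw [show (A + Z) + Z = A + (Z + Z) from by abel]
    have : v ∈ upperBounds (S' + (Z + Z)) := by
      rw [show S' + (Z + Z) = (S' + Z) + Z from by abel]
      exact hv3.2
    exact ub_add_right (ub_pm_sum_subset hX hpq) this

theorem pmSet_add_subset (y z : X) : pmSet (y + z) ⊆ pmSet y + pmSet z := by
  rintro a (rfl | h)
  · exact Set.add_mem_add (mem_pmSet_left y) (mem_pmSet_left z)
  · rcases h with rfl
    rw [show -(y + z) = -y + -z from by abel]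
    exact Set.add_mem_add (mem_pmSet_right y) (mem_pmSet_right z)

/-- Lemma D : `x ⊥ y` and `x ⊥ z` imply `x ⊥ (y+z)`. -/
theorem udis_add_right (hX : IsPreRiesz X) {x y z : X} (hxy : UDisjoint x y)
    (hxz : UDisjoint x z) : UDisjoint x (y + z) := by
  apply udis_of_ub_union_eq hX
  refine Set.Subset.antisymm ?_ (ub_pm_add_subset_union hX x (y + z))
  have HB := ub_union_eq_of_udis hX hxy
  have HC := ub_union_eq_of_udis hX hxz
  set A := pmSet x with hA
  set B := pmSet y with hB'
  set C := pmSet z with hC'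
  set W := pmSet (y + z) with hW
  have finA : A.Finite := pmSet_finite x
  have finB : B.Finite := pmSet_finite y
  have finC : C.Finite := pmSet_finite z
  have finW : W.Finite := pmSet_finite (y + z)
  have neA : A.Nonempty := pmSet_nonempty x
  have neB : B.Nonempty := pmSet_nonempty y
  have neC : C.Nonempty := pmSet_nonempty z
  have neW : W.Nonempty := pmSet_nonempty (y + z)
  -- step (6)
  have s6 : upperBounds (A ∪ (B + C)) ⊆ upperBounds (B + (A ∪ C)) := by
    intro v hv
    rcases mem_ub_union.mp hv with ⟨hvA, hvBC⟩
    have hbb := mem_ub_add.mp hvBC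
    have hvB : v ∈ upperBounds B := by
      rw [hB', mem_ub_pm]
      constructor
      · exact lemC' hX (q := z) (hbb _ (mem_pmSet_left y) _ (mem_pmSet_left z))
          (hbb _ (mem_pmSet_left y) _ (mem_pmSet_right z))
      · exact lemC' hX (q := z) (hbb _ (mem_pmSet_right y) _ (mem_pmSet_left z))
          (hbb _ (mem_pmSet_right y) _ (mem_pmSet_right z))
    have hvAB : v ∈ upperBounds (A + B) := HB ▸ mem_ub_union.mpr ⟨hvA, hvB⟩
    rw [show B + (A ∪ C) = (B + A) ∪ (B + C) from Set.add_union .., mem_ub_union]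
    exact ⟨by rwa [add_comm B A], hvBC⟩
  -- step (3)
  have s3 : upperBounds ((B + C) + (A ∪ W)) ⊆ upperBounds (W + (A ∪ (B + C))) := by
    intro v hv
    have hv' : v ∈ upperBounds ((B + C) + A) ∧ v ∈ upperBounds ((B + C) + W) := by
      rw [← mem_ub_union, ← Set.add_union]; exact hv
    rw [show W + (A ∪ (B + C)) = (W + A) ∪ (W + (B + C)) from Set.add_union .., mem_ub_union]
    constructor
    · exact upperBounds_mono_set (Set.add_subset_add_right (pmSet_add_subset y z)) hv'.1
    · rw [add_comm W (B + C)]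
      exact hv'.2
  -- step (8)
  have s8 : upperBounds (((A + C) + (A ∪ W)) + (A ∪ (B + C))) ⊆
      upperBounds (((A + W) + (A ∪ C)) + (A ∪ (B + C))) := by
    intro v hv
    have s7 : upperBounds ((A ∪ (B + C)) + ((A + C) + (A ∪ W))) ⊆
        upperBounds ((B + (A ∪ C)) + ((A + C) + (A ∪ W))) := ub_add_right s6
    have hv7 : v ∈ upperBounds ((B + (A ∪ C)) + ((A + C) + (A ∪ W))) := by
      apply s7
      rwa [show (A ∪ (B + C)) + ((A + C) + (A ∪ W)) =
        ((A + C) + (A ∪ W)) + (A ∪ (B + C)) from by abel]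
    have s5 : upperBounds ((((B + C) + (A ∪ W)) + A) + (A ∪ C)) ⊆
        upperBounds (((W + (A ∪ (B + C))) + A) + (A ∪ C)) :=
      ub_add_right (ub_add_right s3)
    have hv5 : v ∈ upperBounds (((W + (A ∪ (B + C))) + A) + (A ∪ C)) := by
      apply s5
      rwa [show (((B + C) + (A ∪ W)) + A) + (A ∪ C) =
        (B + (A ∪ C)) + ((A + C) + (A ∪ W)) from by abel]
    rwa [show ((W + (A ∪ (B + C))) + A) + (A ∪ C) =
      ((A + W) + (A ∪ C)) + (A ∪ (B + C)) from by abel] at hv5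
  -- cancel 1 : step (9)
  have s9 : upperBounds ((A + C) + (A ∪ W)) ⊆ upperBounds ((A + W) + (A ∪ C)) :=
    ub_cancel hX ((finA.add finW).add (finA.union finC)) (finA.union (finB.add finC))
      ((neA.add neW).add (neA.mono Set.subset_union_left))
      (neA.mono Set.subset_union_left) s8
  -- cancel 2 : conclusion
  apply ub_cancel hX (E := A ∪ C) (finA.add finW) (finA.union finC)
    (neA.add neW) (neA.mono Set.subset_union_left)
  intro v hv
  apply s9
  have : v ∈ upperBounds ((A ∪ C) + (A ∪ W)) := by
    rwa [add_comm (A ∪ C) (A ∪ W)]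
  rwa [ub_congr_add (U := A ∪ W) HC] at this

theorem udis_symm {x y : X} (h : UDisjoint x y) : UDisjoint y x := by
  unfold UDisjoint at h ⊢
  rw [add_comm y x, show -y - x = -x - y from by abel,
    Set.pair_comm (y - x) (x - y)]
  exact h

theorem udis_neg_right {x y : X} (h : UDisjoint x y) : UDisjoint x (-y) := by
  unfold UDisjoint at h ⊢
  rw [show x + -y = x - y from by abel, show -x - -y = y - x from by abel,
    show x - -y = x + y from by abel, show -y - x = -x - y from by abel]
  exact h.symm

theorem udis_zero_right (x : X) : UDisjoint x 0 := by
  unfold UDisjoint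
  rw [show x + 0 = x from by abel, show -x - 0 = -x from by abel,
    show x - 0 = x from by abel, show (0:X) - x = -x from by abel]

theorem udis_self {x : X} (h : UDisjoint x x) : x = 0 := by
  unfold UDisjoint at h
  have h0 : (0:X) ∈ upperBounds ({x - x, x - x} : Set X) := by
    intro a ha
    rcases ha with rfl | ha
    · simp
    · rcases ha with rfl; simp
  rw [← h] at h0
  have h1 : x + x ≤ 0 := h0 (Set.mem_insert _ _)
  have h2 : -x - x ≤ 0 := h0 (Set.mem_insert_of_mem _ rfl)
  have h3 : x + x = 0 := le_antisymm h1
    (by rwa [show -x - x = -(x+x) from by abel, neg_nonpos] at h2)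
  have h4 : (2:ℝ) • x = 0 := by rw [two_smul]; exact h3
  calc x = (2:ℝ)⁻¹ • ((2:ℝ) • x) := by rw [smul_smul]; norm_num
    _ = 0 := by rw [h4, smul_zero]


theorem zero_mem_dComp (S : Set X) : 0 ∈ dComp S := fun s _ => udis_symm (udis_zero_right s)

theorem subset_dComp_dComp (S : Set X) : S ⊆ dComp (dComp S) :=
  fun s hs _ ht => udis_symm (ht s hs)

theorem dComp_antitone {S T : Set X} (h : S ⊆ T) : dComp T ⊆ dComp S :=
  fun _ ha s hs => ha s (h hs)

theorem dComp_dComp_dComp (S : Set X) : dComp (dComp (dComp S)) = dComp S :=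
  Set.Subset.antisymm (dComp_antitone (subset_dComp_dComp S)) (subset_dComp_dComp (dComp S))

section BP

variable {P Q : X →ₗ[ℝ] X}

theorem bp_idem (hP : IsBandProj P) (x : X) : P (P x) = P x := by
  have := DFunLike.congr_fun hP.1 x
  simpa using this

theorem bp_fix (hP : IsBandProj P) {x : X} (hx : x ∈ Set.range ⇑P) : P x = x := by
  rcases hx with ⟨y, rfl⟩
  exact bp_idem hP y

theorem bp_mem_ker_iff (hP : IsBandProj P) {x : X} :
    x ∈ dComp (Set.range ⇑P) ↔ P x = 0 := by
  rw [← hP.2.2]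
  exact ⟨fun h => h, fun h => h⟩

theorem bp_sub_mem (hP : IsBandProj P) (x : X) : x - P x ∈ dComp (Set.range ⇑P) := by
  rw [bp_mem_ker_iff hP]
  simp [bp_idem hP]

theorem bp_comp_disj (hP : IsBandProj P) (x : X) : UDisjoint (P x) (x - P x) :=
  udis_symm (bp_sub_mem hP x (P x) ⟨x, rfl⟩)

theorem bp_invariant_range (hX : IsPreRiesz X) (hP : IsBandProj P) (hQ : IsBandProj Q)
    {b : X} (hb : b ∈ Set.range ⇑P) : Q b ∈ Set.range ⇑P := by
  rw [show Set.range ⇑P = dComp (dComp (Set.range ⇑P)) from hP.2.1.1]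
  intro z hz
  apply udis_of_udis_add hX (q := b - Q b) (bp_comp_disj hQ b)
  rw [show Q b + (b - Q b) = b from by abel]
  exact udis_symm (hz b hb)

theorem bp_invariant_ker (hX : IsPreRiesz X) (hP : IsBandProj P) (hQ : IsBandProj Q)
    {c : X} (hc : c ∈ dComp (Set.range ⇑P)) : Q c ∈ dComp (Set.range ⇑P) := by
  intro b hb
  apply udis_of_udis_add hX (q := c - Q c) (bp_comp_disj hQ c)
  rw [show Q c + (c - Q c) = c from by abel]
  exact hc b hb

theorem bp_comm_apply (hX : IsPreRiesz X) (hP : IsBandProj P) (hQ : IsBandProj Q) (x : X) :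
    P (Q x) = Q (P x) := by
  have hdec : Q x = Q (P x) + Q (x - P x) := by
    rw [← map_add]; congr 1; abel
  have h1 : P (Q (P x)) = Q (P x) :=
    bp_fix hP (bp_invariant_range hX hP hQ ⟨x, rfl⟩)
  have h2 : P (Q (x - P x)) = 0 :=
    (bp_mem_ker_iff hP).mp (bp_invariant_ker hX hP hQ (bp_sub_mem hP x))
  rw [hdec, map_add, h1, h2, add_zero]

theorem bp_comm (hX : IsPreRiesz X) (hP : IsBandProj P) (hQ : IsBandProj Q) :
    P ∘ₗ Q = Q ∘ₗ P := by
  ext x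
  exact bp_comm_apply hX hP hQ x

theorem bp_comp_idem (hX : IsPreRiesz X) (hP : IsBandProj P) (hQ : IsBandProj Q) (x : X) :
    P (Q (P (Q x))) = P (Q x) := by
  rw [show Q (P (Q x)) = P (Q (Q x)) from (bp_comm_apply hX hP hQ (Q x)).symm,
    bp_idem hQ, bp_idem hP]

theorem bp_comp_range (hX : IsPreRiesz X) (hP : IsBandProj P) (hQ : IsBandProj Q) :
    Set.range ⇑(P ∘ₗ Q) = Set.range ⇑P ∩ Set.range ⇑Q := by
  apply Set.Subset.antisymm
  · rintro _ ⟨x, rfl⟩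
    exact ⟨⟨Q x, rfl⟩, by
      rw [LinearMap.comp_apply, bp_comm_apply hX hP hQ]; exact ⟨P x, rfl⟩⟩
  · rintro b ⟨hbP, hbQ⟩
    exact ⟨b, by rw [LinearMap.comp_apply, bp_fix hQ hbQ, bp_fix hP hbP]⟩

theorem bp_comp_ker_subset (hX : IsPreRiesz X) (hP : IsBandProj P) (hQ : IsBandProj Q)
    {x : X} (hx : P (Q x) = 0) : x ∈ dComp (Set.range ⇑P ∩ Set.range ⇑Q) := by
  rintro w ⟨hwP, hwQ⟩
  have hu : UDisjoint (x - Q x) w := bp_sub_mem hQ x w hwQ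
  have ht : UDisjoint (Q x - P (Q x)) w := bp_sub_mem hP (Q x) w hwP
  have := udis_add_right hX (udis_symm hu) (udis_symm ht)
  rw [show (x - Q x) + (Q x - P (Q x)) = x - P (Q x) from by abel, hx, sub_zero] at this
  exact udis_symm this

theorem bp_comp_ker (hX : IsPreRiesz X) (hP : IsBandProj P) (hQ : IsBandProj Q) :
    (LinearMap.ker (P ∘ₗ Q) : Set X) = dComp (Set.range ⇑P ∩ Set.range ⇑Q) := by
  apply Set.Subset.antisymm
  · intro x hx
    exact bp_comp_ker_subset hX hP hQ (by simpa [LinearMap.mem_ker] using hx)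
  · intro z hz
    have hRz : P (Q z) ∈ Set.range ⇑P ∩ Set.range ⇑Q := by
      rw [← bp_comp_range hX hP hQ]
      exact ⟨z, rfl⟩
    have h1 : UDisjoint z (P (Q z)) := hz _ hRz
    have hker : P (Q (z - P (Q z))) = 0 := by
      rw [map_sub, map_sub, bp_comp_idem hX hP hQ, sub_self]
    have h2 : UDisjoint (z - P (Q z)) (P (Q z)) :=
      bp_comp_ker_subset hX hP hQ hker _ hRz
    have h3 := udis_add_right hX (udis_symm h1) (udis_neg_right (udis_symm h2))
    rw [show z + -(z - P (Q z)) = P (Q z) from by abel] at h3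
    have h4 : P (Q z) = 0 := udis_self h3
    simp [LinearMap.mem_ker, h4]

theorem bp_comp (hX : IsPreRiesz X) (hP : IsBandProj P) (hQ : IsBandProj Q) :
    IsBandProj (P ∘ₗ Q) := by
  have hrange := bp_comp_range hX hP hQ
  have hker := bp_comp_ker hX hP hQ
  have hkermem : ∀ x : X, x - P (Q x) ∈ dComp (Set.range ⇑P ∩ Set.range ⇑Q) := by
    intro x
    rw [← hker]
    simp [LinearMap.mem_ker, map_sub, bp_comp_idem hX hP hQ]
  refine ⟨?_, ⟨?_, ?_, ?_⟩, ?_⟩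
  · ext x
    simp only [LinearMap.comp_apply]
    exact bp_comp_idem hX hP hQ x
  · -- IsBand
    rw [IsBand, hrange]
    apply Set.Subset.antisymm
    · -- inter ⊆ ddComp : general
      exact subset_dComp_dComp _
    · -- ddComp ⊆ inter
      intro z hz
      have hsub : (LinearMap.ker (P ∘ₗ Q) : Set X) ⊆ dComp (Set.range ⇑P ∩ Set.range ⇑Q) :=
        hker.le
      have hz' : z ∈ dComp ((LinearMap.ker (P ∘ₗ Q) : Set X)) := by
        intro s hs
        exact hz s (hsub hs)
      have hzk : z - P (Q z) ∈ (LinearMap.ker (P ∘ₗ Q) : Set X) := by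
        simp [LinearMap.mem_ker, map_sub, bp_comp_idem hX hP hQ]
      have h1 : UDisjoint z (z - P (Q z)) := hz' _ hzk
      have hRz : P (Q z) ∈ Set.range ⇑P ∩ Set.range ⇑Q := by
        rw [← bp_comp_range hX hP hQ]; exact ⟨z, rfl⟩
      have h2 : UDisjoint (P (Q z)) (z - P (Q z)) := by
        have := (hker.le hzk) _ hRz
        exact udis_symm this
      have h3 := udis_add_right hX (udis_symm h1) (udis_neg_right (udis_symm h2))
      rw [show z + -(P (Q z)) = z - P (Q z) from by abel] at h3
      have h4 : z - P (Q z) = 0 := udis_self h3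
      have : z = P (Q z) := by
        rwa [sub_eq_zero] at h4
      rw [this]
      rw [← bp_comp_range hX hP hQ]
      exact ⟨z, rfl⟩
  · -- inter with dComp is {0}
    rw [hrange]
    apply Set.Subset.antisymm
    · rintro a ⟨ha1, ha2⟩
      exact udis_self (ha2 a ha1)
    · rintro a (rfl : a = 0)
      exact ⟨⟨⟨0, map_zero P⟩, ⟨0, map_zero Q⟩⟩, zero_mem_dComp _⟩
  · -- decomposition
    rw [hrange]
    intro x
    refine ⟨P (Q x), ?_, x - P (Q x), hkermem x, by abel⟩
    rw [← bp_comp_range hX hP hQ]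
    exact ⟨x, rfl⟩
  · rw [hrange]
    exact hker

end BP

section BP2

variable {P Q : X →ₗ[ℝ] X}

theorem dComp_univ : dComp (Set.univ : Set X) = {0} := by
  apply Set.Subset.antisymm
  · intro a ha
    exact udis_self (ha a (Set.mem_univ a))
  · rintro a (rfl : a = 0)
    exact zero_mem_dComp _

theorem dComp_singleton_zero : dComp ({0} : Set X) = Set.univ := by
  apply Set.Subset.antisymm (Set.subset_univ _)
  rintro a - s (rfl : s = 0)
  exact udis_zero_right a

theorem bp_id : IsBandProj (LinearMap.id : X →ₗ[ℝ] X) := by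
  have hr : Set.range ⇑(LinearMap.id : X →ₗ[ℝ] X) = Set.univ := by
    simp [LinearMap.id_coe]
  refine ⟨rfl, ⟨?_, ?_, ?_⟩, ?_⟩
  · rw [IsBand, hr, dComp_univ, dComp_singleton_zero]
  · rw [hr, dComp_univ]
    simp
  · rw [hr, dComp_univ]
    intro x
    exact ⟨x, Set.mem_univ x, 0, rfl, by abel⟩
  · rw [hr, dComp_univ]
    apply Set.Subset.antisymm
    · intro a ha
      simpa [LinearMap.mem_ker] using ha
    · rintro a (rfl : a = 0)
      simp [LinearMap.mem_ker]

theorem bp_zero : IsBandProj (0 : X →ₗ[ℝ] X) := by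
  have hr : Set.range ⇑(0 : X →ₗ[ℝ] X) = {0} := by
    ext a
    simp [eq_comm]
  refine ⟨by ext x; simp, ⟨?_, ?_, ?_⟩, ?_⟩
  · rw [IsBand, hr, dComp_singleton_zero, dComp_univ]
  · rw [hr, dComp_singleton_zero]
    simp
  · rw [hr, dComp_singleton_zero]
    intro x
    exact ⟨0, rfl, x, Set.mem_univ x, by abel⟩
  · rw [hr, dComp_singleton_zero]
    apply Set.Subset.antisymm (Set.subset_univ _)
    intro a _
    simp [LinearMap.mem_ker]

theorem bp_compl (hP : IsBandProj P) : IsBandProj (LinearMap.id - P) := by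
  have happ : ∀ x : X, ((LinearMap.id : X →ₗ[ℝ] X) - P) x = x - P x := fun x => rfl
  have hr : Set.range ⇑((LinearMap.id : X →ₗ[ℝ] X) - P) = dComp (Set.range ⇑P) := by
    apply Set.Subset.antisymm
    · rintro _ ⟨x, rfl⟩
      rw [happ]
      exact bp_sub_mem hP x
    · intro c hc
      have hc0 : P c = 0 := (bp_mem_ker_iff hP).mp hc
      exact ⟨c, by rw [happ, hc0, sub_zero]⟩
  refine ⟨?_, ⟨?_, ?_, ?_⟩, ?_⟩
  · ext x
    simp [happ, map_sub, bp_idem hP]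
  · rw [IsBand, hr]
    exact (dComp_dComp_dComp _).symm
  · rw [hr]
    apply Set.Subset.antisymm
    · rintro a ⟨ha1, ha2⟩
      exact udis_self (ha2 a ha1)
    · rintro a (rfl : a = 0)
      exact ⟨zero_mem_dComp _, zero_mem_dComp _⟩
  · rw [hr]
    intro x
    exact ⟨x - P x, bp_sub_mem hP x, P x, subset_dComp_dComp _ ⟨x, rfl⟩, by abel⟩
  · rw [hr]
    have hk : (LinearMap.ker ((LinearMap.id : X →ₗ[ℝ] X) - P) : Set X) = Set.range ⇑P := by
      apply Set.Subset.antisymm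
      · intro a ha
        have : a - P a = 0 := by simpa [LinearMap.mem_ker, happ] using ha
        exact ⟨a, (sub_eq_zero.mp this).symm⟩
      · intro a ha
        have : P a = a := bp_fix hP ha
        simp [LinearMap.mem_ker, happ, this]
    rw [hk, ← IsBand]
    exact hP.2.1.1

theorem bp_range_inj (hP : IsBandProj P) (hQ : IsBandProj Q)
    (h : Set.range ⇑P = Set.range ⇑Q) : P = Q := by
  ext x
  have h1 : Q (P x) = P x := bp_fix hQ (h ▸ (⟨x, rfl⟩ : P x ∈ Set.range ⇑P))
  have h2 : Q (x - P x) = 0 := by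
    apply (bp_mem_ker_iff hQ).mp
    rw [← h]
    exact bp_sub_mem hP x
  have : Q x = Q (P x) + Q (x - P x) := by rw [← map_add]; congr 1; abel
  rw [this, h1, h2, add_zero]

end BP2

section Count

open Module

variable {P Q : X →ₗ[ℝ] X} [FiniteDimensional ℝ X]

/-- An atom among band projections. -/
def IsAtomBP (a : X →ₗ[ℝ] X) : Prop :=
  IsBandProj a ∧ a ≠ 0 ∧
    ∀ Q : X →ₗ[ℝ] X, IsBandProj Q → a ∘ₗ Q = Q → Q = 0 ∨ Q = a

theorem bp_rank_zero (h : finrank ℝ (LinearMap.range P) = 0) : P = 0 := by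
  have : LinearMap.range P = ⊥ := Submodule.finrank_eq_zero.mp h
  exact LinearMap.range_eq_bot.mp this

theorem bpLe_range (h : Q ∘ₗ P = P) : LinearMap.range P ≤ LinearMap.range Q := by
  rintro _ ⟨x, rfl⟩
  exact ⟨P x, DFunLike.congr_fun h x⟩

theorem bp_eq_of_le_of_rank_le (hP : IsBandProj P) (hQ : IsBandProj Q) (h : Q ∘ₗ P = P)
    (hr : finrank ℝ (LinearMap.range Q) ≤ finrank ℝ (LinearMap.range P)) : P = Q := by
  have hrange : LinearMap.range P = LinearMap.range Q :=
    Submodule.eq_of_le_of_finrank_le (bpLe_range h) hr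
  apply bp_range_inj hP hQ
  rw [← LinearMap.coe_range, ← LinearMap.coe_range, hrange]

theorem bp_atom_below (hX : IsPreRiesz X) :
    ∀ n (P : X →ₗ[ℝ] X), IsBandProj P → P ≠ 0 → finrank ℝ (LinearMap.range P) ≤ n →
      ∃ a, IsAtomBP a ∧ P ∘ₗ a = a := by
  intro n
  induction n with
  | zero =>
    intro P hP hP0 hr
    exact absurd (bp_rank_zero (Nat.le_zero.mp hr)) hP0
  | succ n ih =>
    intro P hP hP0 hr
    by_cases hat : ∀ Q : X →ₗ[ℝ] X, IsBandProj Q → P ∘ₗ Q = Q → Q = 0 ∨ Q = P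
    · exact ⟨P, ⟨hP, hP0, hat⟩, hP.1⟩
    · push_neg at hat
      obtain ⟨Q, hQ, hle, hQ0, hQP⟩ := hat
      have hrQ : finrank ℝ (LinearMap.range Q) ≤ n := by
        by_contra hcon
        push_neg at hcon
        have hle2 : finrank ℝ (LinearMap.range Q) ≤ finrank ℝ (LinearMap.range P) :=
          Submodule.finrank_mono (bpLe_range hle)
        have hPQr : finrank ℝ (LinearMap.range P) ≤ finrank ℝ (LinearMap.range Q) := by omega
        exact hQP (bp_eq_of_le_of_rank_le hQ hP hle hPQr)
      obtain ⟨a, ha, haQ⟩ := ih Q hQ hQ0 hrQ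
      refine ⟨a, ha, ?_⟩
      calc P ∘ₗ a = P ∘ₗ (Q ∘ₗ a) := by rw [haQ]
        _ = (P ∘ₗ Q) ∘ₗ a := by rw [LinearMap.comp_assoc]
        _ = Q ∘ₗ a := by rw [hle]
        _ = a := haQ

theorem bp_atom_orth (hX : IsPreRiesz X) {a b : X →ₗ[ℝ] X} (ha : IsAtomBP a) (hb : IsAtomBP b)
    (hab : a ≠ b) : a ∘ₗ b = 0 := by
  have hR : IsBandProj (a ∘ₗ b) := bp_comp hX ha.1 hb.1
  have hRa : a ∘ₗ (a ∘ₗ b) = a ∘ₗ b := by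
    rw [← LinearMap.comp_assoc, ha.1.1]
  have hRb : b ∘ₗ (a ∘ₗ b) = a ∘ₗ b := by
    rw [← LinearMap.comp_assoc, bp_comm hX hb.1 ha.1, LinearMap.comp_assoc, hb.1.1]
  rcases ha.2.2 _ hR hRa with h0 | hA
  · exact h0
  · rcases hb.2.2 _ hR hRb with h0 | hB
    · exact h0
    · exact absurd (hA.symm.trans hB) hab

/-- sum of two "orthogonal" band projections. -/
theorem bp_add (hX : IsPreRiesz X) (hP : IsBandProj P) (hQ : IsBandProj Q)
    (hPQ : P ∘ₗ Q = 0) (hQP : Q ∘ₗ P = 0) : IsBandProj (P + Q) := by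
  have key : P + Q = LinearMap.id - ((LinearMap.id - P) ∘ₗ (LinearMap.id - Q)) := by
    ext x
    have h0 : P (Q x) = 0 := DFunLike.congr_fun hPQ x
    simp [LinearMap.sub_apply, LinearMap.comp_apply, map_sub, h0]
    abel
  rw [key]
  exact bp_compl (bp_comp hX (bp_compl hP) (bp_compl hQ))

theorem bp_add_rank (hP : IsBandProj P) (hQ : IsBandProj Q)
    (hPQ : P ∘ₗ Q = 0) (hQP : Q ∘ₗ P = 0) :
    finrank ℝ (LinearMap.range (P + Q)) =
      finrank ℝ (LinearMap.range P) + finrank ℝ (LinearMap.range Q) := by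
  have hsup : LinearMap.range (P + Q) = LinearMap.range P ⊔ LinearMap.range Q := by
    apply le_antisymm
    · rintro _ ⟨x, rfl⟩
      exact Submodule.add_mem_sup ⟨x, rfl⟩ ⟨x, rfl⟩
    · apply sup_le
      · rintro _ ⟨x, rfl⟩
        refine ⟨P x, ?_⟩
        have h1 : P (P x) = P x := bp_idem hP x
        have h2 : Q (P x) = 0 := DFunLike.congr_fun hQP x
        simp [LinearMap.add_apply, h1, h2]
      · rintro _ ⟨x, rfl⟩
        refine ⟨Q x, ?_⟩
        have h1 : Q (Q x) = Q x := bp_idem hQ x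
        have h2 : P (Q x) = 0 := DFunLike.congr_fun hPQ x
        simp [LinearMap.add_apply, h1, h2]
  have hinf : LinearMap.range P ⊓ LinearMap.range Q = ⊥ := by
    rw [eq_bot_iff]
    rintro x ⟨hxP, hxQ⟩
    have h1 : P x = x := bp_fix hP (by rwa [LinearMap.coe_range] at hxP)
    have h2 : Q x = x := bp_fix hQ (by rwa [LinearMap.coe_range] at hxQ)
    have : Q (P x) = 0 := DFunLike.congr_fun hQP x
    rw [h1, h2] at this
    simp [this]
  have := Submodule.finrank_sup_add_finrank_inf_eq (LinearMap.range P) (LinearMap.range Q)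
  rw [hinf] at this
  simp only [finrank_bot, add_zero] at this
  rw [hsup]
  exact this

end Count

section Count2

open Module

variable [FiniteDimensional ℝ X]

theorem bp_sum (hX : IsPreRiesz X) (T : Finset (X →ₗ[ℝ] X)) (hT : ∀ a ∈ T, IsAtomBP a) :
    IsBandProj (∑ a ∈ T, a) ∧
    (∀ b : X →ₗ[ℝ] X, IsAtomBP b → b ∉ T →
      (∑ a ∈ T, a) ∘ₗ b = 0 ∧ b ∘ₗ (∑ a ∈ T, a) = 0) ∧
    (∀ b ∈ T, (∑ a ∈ T, a) ∘ₗ b = b) ∧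
    finrank ℝ (LinearMap.range (∑ a ∈ T, a)) =
      ∑ a ∈ T, finrank ℝ (LinearMap.range a) := by
  classical
  induction T using Finset.induction_on with
  | empty =>
    refine ⟨by simpa using bp_zero, ?_, ?_, ?_⟩
    · intro b _ _
      simp
    · intro b hb
      simp at hb
    · simp
      exact Submodule.finrank_eq_zero.mpr (LinearMap.range_eq_bot.mpr rfl)
  | insert a T ha ih =>
    have hTa : ∀ b ∈ T, IsAtomBP b := fun b hb => hT b (Finset.mem_insert_of_mem hb)
    obtain ⟨ihm, ihorth, ihin, ihrk⟩ := ih hTa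
    have haA : IsAtomBP a := hT a (Finset.mem_insert_self a T)
    have horth := ihorth a haA ha
    have hsum : ∑ b ∈ insert a T, b = a + ∑ b ∈ T, b := Finset.sum_insert ha
    have haS : a ∘ₗ (∑ b ∈ T, b) = 0 := horth.2
    have hSa : (∑ b ∈ T, b) ∘ₗ a = 0 := horth.1
    have hmem : IsBandProj (a + ∑ b ∈ T, b) := bp_add hX haA.1 ihm haS hSa
    refine ⟨by rwa [hsum], ?_, ?_, ?_⟩
    · intro b hb hbn
      have hbna : b ≠ a := fun h => hbn (h ▸ Finset.mem_insert_self a T)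
      have hbnT : b ∉ T := fun h => hbn (Finset.mem_insert_of_mem h)
      have h1 : a ∘ₗ b = 0 := bp_atom_orth hX haA hb (fun h => hbna h.symm)
      have h2 : b ∘ₗ a = 0 := bp_atom_orth hX hb haA hbna
      obtain ⟨h3, h4⟩ := ihorth b hb hbnT
      constructor
      · rw [hsum, LinearMap.add_comp, h1, h3, add_zero]
      · rw [hsum, LinearMap.comp_add, h2, h4, add_zero]
    · intro b hb
      rw [hsum, LinearMap.add_comp]
      rcases Finset.mem_insert.mp hb with rfl | hbT
      · rw [haA.1.1, hSa, add_zero]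
      · have hab : a ≠ b := fun h => ha (h ▸ hbT)
        rw [bp_atom_orth hX haA (hTa b hbT) hab, ihin b hbT, zero_add]
    · rw [hsum, Finset.sum_insert ha, ← ihrk]
      exact bp_add_rank haA.1 ihm haS hSa

theorem bp_atom_rank_pos {a : X →ₗ[ℝ] X} (ha : IsAtomBP a) :
    1 ≤ finrank ℝ (LinearMap.range a) := by
  rw [Nat.one_le_iff_ne_zero]
  intro h
  exact ha.2.1 (bp_rank_zero h)

theorem bp_atom_card_le (hX : IsPreRiesz X) (T : Finset (X →ₗ[ℝ] X))
    (hT : ∀ a ∈ T, IsAtomBP a) : T.card ≤ finrank ℝ X := by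
  obtain ⟨_, _, _, hrk⟩ := bp_sum hX T hT
  calc T.card = ∑ _a ∈ T, 1 := by simp
    _ ≤ ∑ a ∈ T, finrank ℝ (LinearMap.range a) :=
        Finset.sum_le_sum (fun a ha => bp_atom_rank_pos (hT a ha))
    _ = finrank ℝ (LinearMap.range (∑ a ∈ T, a)) := hrk.symm
    _ ≤ finrank ℝ X := Submodule.finrank_le _

theorem bp_atoms_finite (hX : IsPreRiesz X) : {a : X →ₗ[ℝ] X | IsAtomBP a}.Finite := by
  by_contra h
  have h' : {a : X →ₗ[ℝ] X | IsAtomBP a}.Infinite := h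
  obtain ⟨T, hTsub, hTcard⟩ := h'.exists_subset_card_eq (finrank ℝ X + 1)
  have := bp_atom_card_le hX T (fun a ha => hTsub ha)
  omega

end Count2

section Final

open Module

variable [FiniteDimensional ℝ X]

theorem bp_sep (hX : IsPreRiesz X) {P Q : X →ₗ[ℝ] X} (hP : IsBandProj P) (hQ : IsBandProj Q)
    (h : ∀ a : X →ₗ[ℝ] X, IsAtomBP a → (P ∘ₗ a = a ↔ Q ∘ₗ a = a)) : P = Q := by
  suffices key : ∀ P' Q' : X →ₗ[ℝ] X, IsBandProj P' → IsBandProj Q' →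
      (∀ a : X →ₗ[ℝ] X, IsAtomBP a → P' ∘ₗ a = a → Q' ∘ₗ a = a) → P' ∘ₗ Q' = P' by
    have h1 := key P Q hP hQ (fun a ha hPa => (h a ha).mp hPa)
    have h2 := key Q P hQ hP (fun a ha hQa => (h a ha).mpr hQa)
    rw [← h1, bp_comm hX hP hQ, h2]
  intro P' Q' hP' hQ' himp
  set R := P' ∘ₗ ((LinearMap.id : X →ₗ[ℝ] X) - Q') with hR
  have hRmem : IsBandProj R := bp_comp hX hP' (bp_compl hQ')
  have hR0 : R = 0 := by
    by_contra hne
    obtain ⟨a, ha, haR⟩ := bp_atom_below hX (finrank ℝ (LinearMap.range R)) R hRmem hne le_rfl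
    have hPR : P' ∘ₗ R = R := by rw [hR, ← LinearMap.comp_assoc, hP'.1]
    have haP : P' ∘ₗ a = a := by rw [← haR, ← LinearMap.comp_assoc, hPR]
    have haQ : Q' ∘ₗ a = a := himp a ha haP
    have hCR : ((LinearMap.id : X →ₗ[ℝ] X) - Q') ∘ₗ R = R := by
      rw [hR, ← LinearMap.comp_assoc, bp_comm hX (bp_compl hQ') hP', LinearMap.comp_assoc,
        (bp_compl hQ').1]
    have haC : ((LinearMap.id : X →ₗ[ℝ] X) - Q') ∘ₗ a = a := by
      rw [← haR, ← LinearMap.comp_assoc, hCR]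
    have e : ((LinearMap.id : X →ₗ[ℝ] X) - Q') ∘ₗ a = a - a := by
      rw [LinearMap.sub_comp, LinearMap.id_comp, haQ]
    rw [haC] at e
    exact ha.2.1 (by simpa using e)
  have h2 : P' ∘ₗ (LinearMap.id : X →ₗ[ℝ] X) - P' ∘ₗ Q' = 0 := by
    rw [← LinearMap.comp_sub]
    exact hR0
  rw [LinearMap.comp_id] at h2
  exact (sub_eq_zero.mp h2).symm

theorem bp_main (hX : IsPreRiesz X) :
    {P : X →ₗ[ℝ] X | IsBandProj P}.Finite ∧
    ∃ m ≤ Module.finrank ℝ X, {P : X →ₗ[ℝ] X | IsBandProj P}.ncard = 2 ^ m := by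
  classical
  have hAt := bp_atoms_finite hX
  set F := hAt.toFinset with hF
  have hFmem : ∀ a : X →ₗ[ℝ] X, a ∈ F ↔ IsAtomBP a := fun a => hAt.mem_toFinset
  set g : Finset (X →ₗ[ℝ] X) → (X →ₗ[ℝ] X) := fun T => ∑ a ∈ T, a with hg
  set φ : (X →ₗ[ℝ] X) → Finset (X →ₗ[ℝ] X) :=
    fun P => F.filter (fun a => P ∘ₗ a = a) with hφ
  have hkey1 : ∀ T ∈ F.powerset, IsBandProj (g T) ∧ φ (g T) = T := by
    intro T hT
    rw [Finset.mem_powerset] at hT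
    have hTat : ∀ a ∈ T, IsAtomBP a := fun a ha => (hFmem a).mp (hT ha)
    obtain ⟨hmem, horth, hin, -⟩ := bp_sum hX T hTat
    refine ⟨hmem, ?_⟩
    ext a
    simp only [hφ, Finset.mem_filter]
    constructor
    · rintro ⟨haF, hae⟩
      by_contra hnT
      have h0 := (horth a ((hFmem a).mp haF) hnT).1
      exact ((hFmem a).mp haF).2.1 (by rw [← hae]; exact h0)
    · intro haT
      exact ⟨hT haT, hin a haT⟩
  have hkey2 : ∀ P : X →ₗ[ℝ] X, IsBandProj P → g (φ P) = P := by
    intro P hP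
    have hφsub : φ P ∈ F.powerset := Finset.mem_powerset.mpr (Finset.filter_subset _ _)
    obtain ⟨hgmem, hgφ⟩ := hkey1 _ hφsub
    apply bp_sep hX hgmem hP
    intro a ha
    constructor
    · intro h1
      have hmem : a ∈ φ (g (φ P)) := Finset.mem_filter.mpr ⟨(hFmem a).mpr ha, h1⟩
      rw [hgφ] at hmem
      exact (Finset.mem_filter.mp hmem).2
    · intro h1
      have hmem : a ∈ φ P := Finset.mem_filter.mpr ⟨(hFmem a).mpr ha, h1⟩
      rw [← hgφ] at hmem
      exact (Finset.mem_filter.mp hmem).2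
  have hSeq : {P : X →ₗ[ℝ] X | IsBandProj P} = ↑(F.powerset.image g) := by
    ext P
    simp only [Set.mem_setOf_eq, Finset.coe_image, Set.mem_image, Finset.mem_coe]
    constructor
    · intro hP
      exact ⟨φ P, Finset.mem_powerset.mpr (Finset.filter_subset _ _), hkey2 P hP⟩
    · rintro ⟨T, hT, rfl⟩
      exact (hkey1 T hT).1
  constructor
  · rw [hSeq]
    exact (F.powerset.image g).finite_toSet
  · refine ⟨F.card, bp_atom_card_le hX F (fun a ha => (hFmem a).mp ha), ?_⟩
    rw [hSeq, Set.ncard_coe_finset]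
    have hinj : Set.InjOn g ↑F.powerset := by
      intro T hT T' hT' hTT
      have e1 := (hkey1 T (Finset.mem_coe.mp hT)).2
      have e2 := (hkey1 T' (Finset.mem_coe.mp hT')).2
      rw [← e1, ← e2, hTT]
    rw [Finset.card_image_of_injOn hinj, Finset.card_powerset]

end Final

/-- On an `n`-dimensional pre-Riesz space the set of band projections is finite with
cardinality `2 ^ m` for some `m ≤ n`. -/
theorem stmt_18 (hX : IsPreRiesz X) [FiniteDimensional ℝ X] :
    {P : X →ₗ[ℝ] X | IsBandProj P}.Finite ∧
    ∃ m ≤ Module.finrank ℝ X, {P : X →ₗ[ℝ] X | IsBandProj P}.ncard = 2 ^ m :=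
  bp_main hX
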